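/- arXiv:2109.13408 — 5 statements merged into one kernel-verified Lean document; each statement's English description precedes it below -/
import Mathlib

section
/- Let N ≥ 3 be a natural number. The cubic polynomial p(β) = (2N−1)β³ − (3N−1)β² − (N−1)β + (N−1) has exactly one root in the open interval (0,1). -/
theorem cubic_unique_root_in_unit_interval (N : ℕ) (hN : 3 ≤ N) :
    ∃! β : ℝ, β ∈ Set.Ioo (0 : ℝ) 1 ∧
      (2 * (N : ℝ) - 1) * β ^ 3 - (3 * (N : ℝ) - 1) * β ^ 2
        - ((N : ℝ) - 1) * β + ((N : ℝ) - 1) = 0 := by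
  have hn : (3 : ℝ) ≤ (N : ℝ) := by exact_mod_cast hN
  set f : ℝ → ℝ := fun β =>
    (2 * (N : ℝ) - 1) * β ^ 3 - (3 * (N : ℝ) - 1) * β ^ 2
      - ((N : ℝ) - 1) * β + ((N : ℝ) - 1) with hf
  have hcont : ContinuousOn f (Set.Icc (0:ℝ) 1) := by fun_prop
  have hf1 : f 1 < 0 := by simp only [hf]; nlinarith
  have hf0 : (0:ℝ) < f 0 := by simp only [hf]; nlinarith
  have hsub : Set.Ioo (f 1) (f 0) ⊆ f '' Set.Ioo 0 1 :=
    intermediate_value_Ioo' zero_le_one hcont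
  obtain ⟨β, hβmem, hβval⟩ := hsub ⟨hf1, hf0⟩
  refine ⟨β, ⟨hβmem, by simpa [hf] using hβval⟩, ?_⟩
  rintro y ⟨⟨hy0, hy1⟩, hyval⟩
  obtain ⟨hβ0, hβ1⟩ := hβmem
  have hβval' : (2 * (N : ℝ) - 1) * β ^ 3 - (3 * (N : ℝ) - 1) * β ^ 2
      - ((N : ℝ) - 1) * β + ((N : ℝ) - 1) = 0 := by simpa [hf] using hβval
  have hq : (2 * (N : ℝ) - 1) * (y ^ 2 + y * β + β ^ 2)
      - (3 * (N : ℝ) - 1) * (y + β) - ((N : ℝ) - 1) < 0 := by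
    nlinarith [mul_pos hy0 hβ0, mul_pos (sub_pos.2 hy1) (sub_pos.2 hβ1),
      mul_pos hy0 (sub_pos.2 hy1), mul_pos hβ0 (sub_pos.2 hβ1),
      mul_pos hy0 (sub_pos.2 hβ1), mul_pos hβ0 (sub_pos.2 hy1), hn]
  have hz : (y - β) * ((2 * (N : ℝ) - 1) * (y ^ 2 + y * β + β ^ 2)
      - (3 * (N : ℝ) - 1) * (y + β) - ((N : ℝ) - 1)) = 0 := by
    linear_combination hyval - hβval'
  rcases mul_eq_zero.1 hz with h | h
  · linarith [sub_eq_zero.1 h]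
  · exact absurd h (ne_of_lt hq)
end

section
/- Let N ≥ 3, and consider the map f on (ℝ⁵)^N defining the symmetric-case multi-agent motivation dynamics: for each k, ẏ_k = ((1+m_k)/2)(u − y_k) + ((1−m_k)/2)((1/N)∑_{j≠k} R^{j−k} y_j − ((N−1)/N) y_k), ṁ_k = σ(1−m_k²)(m_k + 3(v_{k,1}−v_{k,2})/(v_{k,1}+v_{k,2})), v̇_{k,1} = λ(½‖y_k − u‖² − v_{k,1}), v̇_{k,2} = λ(((N−1)/(2N))‖y_k − (1/(N−1))∑_{j≠k} R^{j−k} y_j‖² − v_{k,2}), where R is rotation by 2π/N and u = (1,0). Then f is equivariant under the cyclic group C_N acting by cyclically shifting the agent indices: for the shift-by-one permutation γ, f(γ·Z) = γ·f(Z). -/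
open Real Matrix Finset

/-- Rotation matrix by angle `2π/N`. -/
noncomputable def rotN (N : ℕ) : Matrix (Fin 2) (Fin 2) ℝ :=
  !![Real.cos (2 * π / N), -Real.sin (2 * π / N);
     Real.sin (2 * π / N), Real.cos (2 * π / N)]

/-- `R^{j-k}` with the exponent taken mod `N`. -/
noncomputable def rotPow (N : ℕ) (j k : Fin N) : Matrix (Fin 2) (Fin 2) ℝ :=
  rotN N ^ ((((j : ℤ) - (k : ℤ)) % (N : ℤ)).toNat)

/-- The state of one agent: physical position `y ∈ ℝ²`, motivation `m ∈ ℝ`, values `v₁, v₂`. -/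
abbrev AgentState := (Fin 2 → ℝ) × ℝ × ℝ × ℝ

/-- Designated point `u = (1,0)`. -/
def uvec : Fin 2 → ℝ := ![1, 0]

/-- The symmetric-case multi-agent motivation dynamics vector field. -/
noncomputable def motivationDynamics (N : ℕ) (σ lam : ℝ)
    (Z : Fin N → AgentState) : Fin N → AgentState := fun k =>
  let y : Fin N → (Fin 2 → ℝ) := fun j => (Z j).1
  let m : ℝ := (Z k).2.1
  let v1 : ℝ := (Z k).2.2.1
  let v2 : ℝ := (Z k).2.2.2
  let φ1 : ℝ := (1 / 2) * ∑ i, (y k i - uvec i) ^ 2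
  let cent : Fin 2 → ℝ := (1 / ((N : ℝ) - 1)) • ∑ j ∈ univ \ {k}, rotPow N j k *ᵥ y j
  let φ2 : ℝ := (((N : ℝ) - 1) / (2 * N)) * ∑ i, (y k i - cent i) ^ 2
  ( ((1 + m) / 2) • (uvec - y k)
      + ((1 - m) / 2) • ((1 / (N : ℝ)) • ∑ j ∈ univ \ {k}, rotPow N j k *ᵥ y j
          - (((N : ℝ) - 1) / N) • y k),
    σ * (1 - m ^ 2) * (m + 3 * (v1 - v2) / (v1 + v2)),
    lam * (φ1 - v1),
    lam * (φ2 - v2) )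

/-- The cyclic shift-by-one action: `(γ·Z)ₖ = Z_{k-1}`, i.e. `(z₁,…,z_N) ↦ (z_N, z₁,…,z_{N-1})`. -/
def shiftOne {N : ℕ} [NeZero N] (Z : Fin N → AgentState) : Fin N → AgentState :=
  fun k => Z (k - 1)


lemma coe_sub_one (N : ℕ) [NeZero N] (h : 3 ≤ N) (a : Fin N) :
    ((a - 1 : Fin N) : ℤ) % N = ((a:ℤ) - 1) % N := by
  have h1 : ((1 : Fin N) : ℕ) = 1 := by
    simp [Fin.val_one', Nat.mod_eq_of_lt (by omega : 1 < N)]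
  have h2 : (a - 1).val = (N - 1 + a.val) % N := by rw [Fin.sub_def, h1]
  have h3 : ((a - 1 : Fin N) : ℤ) = ((N:ℤ) - 1 + (a:ℤ)) % N := by
    rw [h2]; push_cast [Nat.cast_sub (by omega : 1 ≤ N)]; ring_nf
  rw [h3, Int.emod_emod_of_dvd _ dvd_rfl,
    show ((N:ℤ) - 1 + a) = ((a:ℤ) - 1) + (N:ℤ) * 1 by ring, Int.add_mul_emod_self_left]

lemma rotPow_sub_one (N : ℕ) [NeZero N] (h : 3 ≤ N) (j k : Fin N) :
    rotPow N (j - 1) (k - 1) = rotPow N j k := by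
  unfold rotPow
  congr 1
  have heq : (((j - 1 : Fin N) : ℤ) - ((k - 1 : Fin N) : ℤ)) % N = (((j:ℤ) - (k:ℤ)) % N) := by
    have := Int.ModEq.sub (coe_sub_one N h j) (coe_sub_one N h k)
    simpa [Int.ModEq, Int.emod_emod_of_dvd _ dvd_rfl, sub_sub_sub_cancel_right] using this
  rw [heq]

lemma sum_shift (N : ℕ) [NeZero N] (h : 3 ≤ N) (y : Fin N → Fin 2 → ℝ) (k : Fin N) :
    ∑ j ∈ univ \ {k}, rotPow N j k *ᵥ y (j - 1)
      = ∑ j ∈ univ \ {k - 1}, rotPow N j (k - 1) *ᵥ y j := by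
  refine Finset.sum_nbij' (fun j => j - 1) (fun j => j + 1) ?_ ?_ ?_ ?_ ?_
  · intro j hj
    simp only [mem_sdiff, mem_univ, mem_singleton, true_and] at hj ⊢
    exact fun hc => hj (by rwa [sub_left_inj] at hc; )
  · intro j hj
    simp only [mem_sdiff, mem_univ, mem_singleton, true_and] at hj ⊢
    intro hc; apply hj; rw [← hc]; exact (add_sub_cancel_right j 1).symm
  · intro j _; exact sub_add_cancel j 1
  · intro j _; exact add_sub_cancel_right j 1
  · intro j hj
    rw [rotPow_sub_one N h j k]


theorem motivationDynamics_equivariant (N : ℕ) [NeZero N] (hN : 3 ≤ N) (σ lam : ℝ)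
    (hσ : 0 < σ) (hlam : 0 < lam)
    (Z : Fin N → AgentState) (hv : ∀ k, (Z k).2.2.1 + (Z k).2.2.2 ≠ 0) :
    motivationDynamics N σ lam (shiftOne Z) = shiftOne (motivationDynamics N σ lam Z) := by
  funext k
  show _ = motivationDynamics N σ lam Z (k - 1)
  simp only [motivationDynamics, shiftOne]
  rw [sum_shift N hN (fun j => (Z j).1) k]
end

section
/- Let y* ∈ (0, 1/2), φ₁ = (1−y*)²/2, φ₂ = ((N−1)/(2N))(y*)² with N ≥ 3, and set c = 2σ(1−y*)²(1+y*)/(φ₁+φ₂), a = 4σy*(1−y*) for σ > 0. Consider the cubic G₁(μ) = (μ+1)[(μ+1)(a−μ) − c]. If σ < 1/(4y*(1−y*)), then all roots of G₁ have negative real part. -/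
theorem G1_roots_stable (N : ℕ) (hN : 3 ≤ N) (y σ : ℝ)
    (hy : y ∈ Set.Ioo (0 : ℝ) (1 / 2)) (hσ : 0 < σ)
    (hσlt : σ < 1 / (4 * y * (1 - y))) :
    ∀ μ : ℂ,
      (μ + 1) * ((μ + 1) * ((4 * σ * y * (1 - y) : ℝ) - μ)
          - ((2 * σ * (1 - y) ^ 2 * (1 + y) /
              ((1 - y) ^ 2 / 2 + ((N : ℝ) - 1) / (2 * N) * y ^ 2) : ℝ))) = 0 →
      μ.re < 0 := by
  obtain ⟨hy0, hy2⟩ := hy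
  set a : ℝ := 4 * σ * y * (1 - y) with ha
  set D : ℝ := (1 - y) ^ 2 / 2 + ((N : ℝ) - 1) / (2 * N) * y ^ 2 with hD
  set c : ℝ := 2 * σ * (1 - y) ^ 2 * (1 + y) / D with hc
  clear_value a D c
  have hN3 : (3 : ℝ) ≤ (N : ℝ) := by exact_mod_cast hN
  have hy1 : y < 1 := by linarith
  have hDpos : 0 < D := by
    have h1 : 0 < (1 - y) ^ 2 / 2 := by nlinarith
    have h2 : 0 ≤ ((N : ℝ) - 1) / (2 * N) * y ^ 2 := by
      apply mul_nonneg
      · apply div_nonneg <;> linarith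
      · positivity
    linarith [hD]
  have hy4 : 0 < 4 * y * (1 - y) := by nlinarith
  have ha1 : a < 1 := by
    have := (lt_div_iff₀ hy4).mp hσlt
    nlinarith
  have hkey : 2 * y * D < 1 - y ^ 2 := by
    have hk : ((N : ℝ) - 1) / (2 * N) < 1 / 2 := by
      rw [div_lt_div_iff₀ (by linarith) (by norm_num)]
      linarith
    have hD12 : D < 1 / 2 := by
      have : ((N : ℝ) - 1) / (2 * N) * y ^ 2 ≤ 1 / 2 * y ^ 2 := by nlinarith
      nlinarith
    nlinarith [hD12, mul_lt_mul_of_pos_left hD12 (show (0:ℝ) < 2 * y by linarith)]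
  have hca : a < c := by
    rw [hc, lt_div_iff₀ hDpos]
    have : 0 < 2 * σ * (1 - y) := by nlinarith
    nlinarith [mul_pos this (sub_pos.mpr hkey)]
  intro μ hμ
  rcases mul_eq_zero.mp hμ with h | h
  · have : μ = -1 := by linear_combination h
    rw [this]; norm_num
  · have heq : (μ + 1) * ((a : ℂ) - μ) = (c : ℂ) := by linear_combination h
    have hre := congrArg Complex.re heq
    have him := congrArg Complex.im heq
    simp [Complex.mul_re, Complex.mul_im, Complex.add_re, Complex.add_im,
      Complex.sub_re, Complex.sub_im, Complex.ofReal_re, Complex.ofReal_im] at hre him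
    -- him : (x + 1) * (-t) + t * (a - x) = 0
    -- hre : (x + 1) * (a - x) - t * (-t) = c
    by_cases htz : μ.im = 0
    · rw [htz] at hre
      by_contra hxn
      push_neg at hxn
      nlinarith
    · have h2x : a - 1 - 2 * μ.re = 0 := by
        have hmul : μ.im * (a - 1 - 2 * μ.re) = 0 := by linear_combination him
        rcases mul_eq_zero.mp hmul with h' | h'
        · exact absurd h' htz
        · exact h'
      linarith
end

section
/- Let y* ∈ (0,1/2), φ₁ = (1−y*)²/2 < 1/4, φ₂ < 1/4, φ₂ > 0. At σ = 1/(4y*(1−y*)), the quantity (4σy*(1−y*) − 1)² + 16σy*(1−y*) − 8σ(1−y*)²(1+y*)/(φ₁+φ₂) is negative; hence the non-(−1) roots of G₁(μ) = (μ+1)[(μ+1)(4σy*(1−y*)−μ) − 2σ(1−y*)²(1+y*)/(φ₁+φ₂)] are a complex conjugate pair with zero real part. -/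
theorem critical_sigma_pure_imaginary_pair (y φ1 φ2 : ℝ)
    (hy : y ∈ Set.Ioo (0 : ℝ) (1 / 2))
    (hφ1 : φ1 = (1 - y) ^ 2 / 2) (hφ1lt : φ1 < 1 / 4)
    (hφ2pos : 0 < φ2) (hφ2lt : φ2 < 1 / 4)
    (σ : ℝ) (hσ : σ = 1 / (4 * y * (1 - y))) :
    (4 * σ * y * (1 - y) - 1) ^ 2 + 16 * σ * y * (1 - y)
        - 8 * σ * (1 - y) ^ 2 * (1 + y) / (φ1 + φ2) < 0 ∧
    ∃ μ : ℂ, μ.re = 0 ∧ μ.im ≠ 0 ∧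
      ∀ z : ℂ,
        (z + 1) * ((z + 1) * ((4 * σ * y * (1 - y) : ℝ) - z)
            - ((2 * σ * (1 - y) ^ 2 * (1 + y) / (φ1 + φ2) : ℝ))) = 0 ↔
        z = -1 ∨ z = μ ∨ z = (starRingEnd ℂ) μ := by
  obtain ⟨hy0, hy1⟩ := hy
  have h1y : 0 < 1 - y := by linarith
  have hσ1 : 4 * σ * y * (1 - y) = 1 := by
    rw [hσ]; field_simp
  have hd : 0 < φ1 + φ2 := by
    have : 0 < φ1 := by rw [hφ1]; positivity
    linarith
  set c : ℝ := 2 * σ * (1 - y) ^ 2 * (1 + y) / (φ1 + φ2) with hcdef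
  have hkey : φ1 + φ2 < 2 * σ * (1 - y) ^ 2 * (1 + y) := by
    have h2 : 2 * σ * (1 - y) ^ 2 * (1 + y) = (1 - y ^ 2) / (2 * y) := by
      rw [hσ]; field_simp; ring
    rw [h2]
    have h3 : (1 : ℝ) / 2 < (1 - y ^ 2) / (2 * y) := by
      rw [div_lt_div_iff₀ (by norm_num) (by linarith)]
      nlinarith
    linarith
  have hc : 1 < c := (one_lt_div hd).mpr hkey
  have h16 : 16 * σ * y * (1 - y) = 4 := by linear_combination 4 * hσ1
  have h8 : 8 * σ * (1 - y) ^ 2 * (1 + y) / (φ1 + φ2) = 4 * c := by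
    rw [hcdef]; ring
  refine ⟨by rw [hσ1, h16, h8]; linarith, ?_⟩
  have hcpos : 0 < c - 1 := by linarith
  set s : ℝ := Real.sqrt (c - 1) with hsdef
  have hs0 : 0 < s := Real.sqrt_pos.mpr hcpos
  have hs2 : s ^ 2 = c - 1 := Real.sq_sqrt hcpos.le
  refine ⟨Complex.I * (s : ℂ), by simp, by simp [hs0.ne'], ?_⟩
  intro z
  have hcast1 : ((4 * σ * y * (1 - y) : ℝ) : ℂ) = 1 := by rw [hσ1]; norm_num
  have hcast2 : ((2 * σ * (1 - y) ^ 2 * (1 + y) / (φ1 + φ2) : ℝ) : ℂ) = (c : ℂ) := by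
    rw [hcdef]
  rw [hcast1, hcast2]
  have hμ2 : (Complex.I * (s : ℂ)) ^ 2 = -((c : ℂ) - 1) := by
    have : ((s : ℂ)) ^ 2 = ((c : ℝ) : ℂ) - 1 := by
      rw [← Complex.ofReal_pow, hs2]; push_cast; ring
    rw [mul_pow, Complex.I_sq, this]; ring
  have hconj : (starRingEnd ℂ) (Complex.I * (s : ℂ)) = -(Complex.I * (s : ℂ)) := by
    simp [Complex.ext_iff]
  rw [hconj]
  have hfact : (z + 1) * ((z + 1) * (1 - z) - (c : ℂ))
      = -((z + 1) * ((z - Complex.I * (s : ℂ)) * (z + Complex.I * (s : ℂ)))) := by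
    linear_combination (-(z + 1)) * hμ2
  rw [hfact, neg_eq_zero, mul_eq_zero, mul_eq_zero]
  constructor
  · rintro (h | h | h)
    · exact Or.inl (eq_neg_of_add_eq_zero_left h)
    · exact Or.inr (Or.inl (sub_eq_zero.mp h))
    · exact Or.inr (Or.inr (eq_neg_of_add_eq_zero_left h))
  · rintro (h | h | h)
    · left; rw [h]; ring
    · right; left; rw [h]; ring
    · right; right; rw [h]; ring
end

section
/- Let N ≥ 3, y* ∈ (0,1) the root of (2N−1)β³−(3N−1)β²−(N−1)β+(N−1)=0, φ₁ = (1−y*)²/2, φ₂ = ((N−1)/(2N))(y*)². Then φ₁ < 1/4 and φ₂ < 1/4. -/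
theorem task_values_lt_quarter (N : ℕ) (hN : 3 ≤ N) (y : ℝ)
    (hy : y ∈ Set.Ioo (0 : ℝ) 1)
    (hroot : (2 * (N : ℝ) - 1) * y ^ 3 - (3 * (N : ℝ) - 1) * y ^ 2
      - ((N : ℝ) - 1) * y + ((N : ℝ) - 1) = 0) :
    (1 - y) ^ 2 / 2 < 1 / 4 ∧ ((N : ℝ) - 1) / (2 * N) * y ^ 2 < 1 / 4 := by
  obtain ⟨hy0, hy1⟩ := hy
  have hn : (3 : ℝ) ≤ (N : ℝ) := by exact_mod_cast hN
  have h2 : y < 1 / 2 := by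
    by_contra h
    push_neg at h
    have hu : (0:ℝ) ≤ y - 1/2 := by linarith
    nlinarith [mul_nonneg hu hu, mul_nonneg (mul_nonneg hu hu) hu,
      mul_nonneg (mul_nonneg hu hu) (sub_pos.2 hy1).le,
      mul_nonneg hu (sub_pos.2 hy1).le,
      mul_nonneg (mul_nonneg hu (sub_pos.2 hy1).le) (by linarith : (0:ℝ) ≤ (N:ℝ) - 3)]
  have h1 : (1 - y) ^ 2 / 2 < 1 / 4 := by
    by_contra h
    push_neg at h
    have hg : (0:ℝ) ≤ (1 - y) ^ 2 - 1/2 := by linarith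
    have hc : (0:ℝ) ≤ (2 * (N:ℝ) - 1) * y + ((N:ℝ) - 1) := by nlinarith
    nlinarith [mul_nonneg hc hg]
  refine ⟨h1, ?_⟩
  have hN0 : (0:ℝ) < (N:ℝ) := by linarith
  rw [div_mul_eq_mul_div, div_lt_iff₀ (by linarith : (0:ℝ) < 2 * (N:ℝ))]
  nlinarith [sq_nonneg y, mul_pos hy0 hy0]
end
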